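/- Let f ∈ Γ₀(H) and let f̃ be its perspective. Then the Fenchel conjugate of f̃ equals the indicator function of the set C = {(u,μ) ∈ H × ℝ : μ + f*(u) ≤ 0}. -/

import Mathlib

open scoped Classical
open Filter Set Topology

noncomputable section

/-- `f` is proper, convex and lower semicontinuous (the class `Γ₀`). -/
def Gamma0 {E : Type*} [NormedAddCommGroup E] [NormedSpace ℝ E] (f : E → EReal) : Prop :=
  (∃ x, f x ≠ ⊤) ∧ (∀ x, f x ≠ ⊥) ∧
  (∀ x y : E, ∀ a b : ℝ, 0 ≤ a → 0 ≤ b → a + b = 1 →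
    f (a • x + b • y) ≤ (a : EReal) * f x + (b : EReal) * f y) ∧
  LowerSemicontinuous f

/-- recession function of `f` with base point `x0 ∈ dom f`:
`(rec f)(x) = lim_{t→∞} (f(x0+tx)-f(x0))/t`, which by convexity equals the supremum. -/
def recFn {E : Type*} [NormedAddCommGroup E] [NormedSpace ℝ E]
    (f : E → EReal) (x0 : E) (x : E) : EReal :=
  ⨆ t ∈ Set.Ioi (0 : ℝ), (f (x0 + t • x) - f x0) * ((t⁻¹ : ℝ) : EReal)

/-- the perspective function of `f` (recession with base point `x0 ∈ dom f`). -/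
def persp {E : Type*} [NormedAddCommGroup E] [NormedSpace ℝ E]
    (f : E → EReal) (x0 : E) (p : E × ℝ) : EReal :=
  if 0 < p.2 then (p.2 : EReal) * f (p.2⁻¹ • p.1)
  else if p.2 = 0 then recFn f x0 p.1 else ⊤

/-- Fenchel conjugate. -/
def conj {E : Type*} [NormedAddCommGroup E] [InnerProductSpace ℝ E]
    (f : E → EReal) (u : E) : EReal :=
  ⨆ x, ((inner ℝ x u : ℝ) : EReal) - f x

/-- Fenchel conjugate on `ℝ`. -/
def conjR (f : ℝ → EReal) (u : ℝ) : EReal := ⨆ x : ℝ, ((x * u : ℝ) : EReal) - f x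

/-- Fenchel conjugate on `E × ℝ` (with the Hilbert direct sum inner product). -/
def conj2 {E : Type*} [NormedAddCommGroup E] [InnerProductSpace ℝ E]
    (g : E × ℝ → EReal) (q : E × ℝ) : EReal :=
  ⨆ p : E × ℝ, (((inner ℝ p.1 q.1 : ℝ) + p.2 * q.2 : ℝ) : EReal) - g p

/-- indicator function of a set. -/
def indE {E : Type*} (C : Set E) (x : E) : EReal := if x ∈ C then 0 else ⊤

/-- support function of a set. -/
def suppFn {E : Type*} [NormedAddCommGroup E] [InnerProductSpace ℝ E]
    (C : Set E) (x : E) : EReal := ⨆ u ∈ C, ((inner ℝ u x : ℝ) : EReal)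

/-- epigraph of an extended-real-valued function. -/
def epi {E : Type*} (f : E → EReal) : Set (E × ℝ) := {p | f p.1 ≤ (p.2 : EReal)}

/-- epigraph of the perspective of `f`, as a subset of `E × ℝ × ℝ`. -/
def epiPersp {E : Type*} [NormedAddCommGroup E] [NormedSpace ℝ E]
    (f : E → EReal) (x0 : E) : Set (E × ℝ × ℝ) :=
  {p | persp f x0 (p.1, p.2.1) ≤ (p.2.2 : EReal)}

/-- `p` is the metric projection of `z` onto `C ⊆ E`. -/
def IsProjE {E : Type*} [NormedAddCommGroup E] (C : Set E) (z p : E) : Prop :=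
  p ∈ C ∧ ∀ q ∈ C, ‖z - p‖ ≤ ‖z - q‖

/-- `p` is the metric projection of `z` onto `C ⊆ E ⊕ ℝ` (Hilbert direct sum distance). -/
def IsProj2 {E : Type*} [NormedAddCommGroup E] (C : Set (E × ℝ)) (z p : E × ℝ) : Prop :=
  p ∈ C ∧ ∀ q ∈ C,
    ‖z.1 - p.1‖ ^ 2 + (z.2 - p.2) ^ 2 ≤ ‖z.1 - q.1‖ ^ 2 + (z.2 - q.2) ^ 2

/-- `p` is the metric projection of `z` onto `C ⊆ E ⊕ ℝ ⊕ ℝ` (Hilbert direct sum distance). -/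
def IsProj3 {E : Type*} [NormedAddCommGroup E] (C : Set (E × ℝ × ℝ)) (z p : E × ℝ × ℝ) : Prop :=
  p ∈ C ∧ ∀ q ∈ C,
    ‖z.1 - p.1‖ ^ 2 + (z.2.1 - p.2.1) ^ 2 + (z.2.2 - p.2.2) ^ 2 ≤
      ‖z.1 - q.1‖ ^ 2 + (z.2.1 - q.2.1) ^ 2 + (z.2.2 - q.2.2) ^ 2

/-- `p = prox_{γ g}(z)` on `E`. -/
def IsProxE {E : Type*} [NormedAddCommGroup E] (g : E → EReal) (γ : ℝ) (z p : E) : Prop :=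
  ∀ y, g p + ((‖z - p‖ ^ 2 / (2 * γ) : ℝ) : EReal) ≤ g y + ((‖z - y‖ ^ 2 / (2 * γ) : ℝ) : EReal)

/-- `p = prox_{γ g}(z)` on `E ⊕ ℝ` (Hilbert direct sum distance). -/
def IsProx2 {E : Type*} [NormedAddCommGroup E] (g : E × ℝ → EReal) (γ : ℝ)
    (z p : E × ℝ) : Prop :=
  ∀ y, g p + (((‖z.1 - p.1‖ ^ 2 + (z.2 - p.2) ^ 2) / (2 * γ) : ℝ) : EReal) ≤
    g y + (((‖z.1 - y.1‖ ^ 2 + (z.2 - y.2) ^ 2) / (2 * γ) : ℝ) : EReal)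

/-- subdifferential of `f` at `x`. -/
def subdiff {E : Type*} [NormedAddCommGroup E] [InnerProductSpace ℝ E]
    (f : E → EReal) (x : E) : Set E :=
  {u | ∀ y, ((inner ℝ (y - x) u : ℝ) : EReal) + f x ≤ f y}

lemma ecases (a : EReal) : a = ⊥ ∨ (∃ r : ℝ, a = (r:EReal)) ∨ a = ⊤ := by
  induction a with
  | bot => exact Or.inl rfl
  | coe r => exact Or.inr (Or.inl ⟨r, rfl⟩)
  | top => exact Or.inr (Or.inr rfl)

theorem stmt2 {H : Type*} [NormedAddCommGroup H] [InnerProductSpace ℝ H] [CompleteSpace H]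
    (f : H → EReal) (hf : Gamma0 f) (x0 : H) (hx0 : f x0 ≠ ⊤) :
    conj2 (persp f x0) =
      indE {q : H × ℝ | (q.2 : EReal) + conj f q.1 ≤ 0} := by
  obtain ⟨-, hbot, -, -⟩ := hf
  obtain ⟨r0, hr0⟩ : ∃ r : ℝ, f x0 = (r : EReal) :=
    ⟨(f x0).toReal, (EReal.coe_toReal hx0 (hbot x0)).symm⟩
  funext q
  obtain ⟨u, μ⟩ := q
  have hconj_lb : ((inner ℝ x0 u - r0 : ℝ) : EReal) ≤ conj f u := by
    have h := le_iSup (fun x => ((inner ℝ x u : ℝ) : EReal) - f x) x0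
    rwa [hr0, ← EReal.coe_sub] at h
  have hconj_ne_bot : conj f u ≠ ⊥ := fun h => by
    rw [h, le_bot_iff] at hconj_lb; exact EReal.coe_ne_bot _ hconj_lb
  by_cases hC : ((μ : ℝ) : EReal) + conj f u ≤ 0
  · have hCmem : ((u, μ) : H × ℝ) ∈ {q : H × ℝ | (q.2 : EReal) + conj f q.1 ≤ 0} := hC
    rw [indE, if_pos hCmem]
    -- conj f u is a real number s with μ + s ≤ 0
    have hconj_ne_top : conj f u ≠ ⊤ := by
      intro h
      rw [h, EReal.coe_add_top] at hC
      exact absurd hC (by simp)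
    obtain ⟨s, hs⟩ : ∃ r : ℝ, conj f u = (r : EReal) :=
      ⟨(conj f u).toReal, (EReal.coe_toReal hconj_ne_top hconj_ne_bot).symm⟩
    have hμs : μ + s ≤ 0 := by
      rw [hs, ← EReal.coe_add] at hC
      exact_mod_cast hC
    -- key inequality : ∀ y, ⟨y,u⟩ + μ ≤ f y
    have key : ∀ y : H, ∀ r : ℝ, f y = (r : EReal) → (inner ℝ y u : ℝ) + μ ≤ r := by
      intro y r hy
      have h1 : ((inner ℝ y u : ℝ) : EReal) - f y ≤ (s : EReal) := by
        rw [← hs]; exact le_iSup (fun x => ((inner ℝ x u : ℝ) : EReal) - f x) y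
      rw [hy, ← EReal.coe_sub, EReal.coe_le_coe_iff] at h1
      linarith
    apply le_antisymm
    · rw [conj2]
      apply iSup_le
      rintro ⟨x, η⟩
      rcases lt_trichotomy 0 η with hη | hη | hη
      · -- η > 0
        have hpersp : persp f x0 (x, η) = (η : EReal) * f (η⁻¹ • x) := by
          simp only [persp]; rw [if_pos hη]
        rw [hpersp]
        set y := η⁻¹ • x with hy
        have hinner : (inner ℝ x u : ℝ) = η * (inner ℝ y u : ℝ) := by
          have hx : x = η • y := by
            rw [hy, smul_smul, mul_inv_cancel₀ hη.ne', one_smul]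
          conv_lhs => rw [hx]
          exact real_inner_smul_left _ _ _
        rcases ecases (f y) with hfy | ⟨r, hfy⟩ | hfy
        · exact absurd hfy (hbot y)
        · rw [hfy, ← EReal.coe_mul, ← EReal.coe_sub]
          have hk := key y r hfy
          have : ((0:ℝ) : EReal) = (0 : EReal) := rfl
          rw [← this, EReal.coe_le_coe_iff]
          nlinarith [hk, hη]
        · rw [hfy, EReal.coe_mul_top_of_pos hη, EReal.sub_top]
          exact bot_le
      · -- η = 0
        subst hη
        have hpersp : persp f x0 (x, 0) = recFn f x0 x := by
          simp [persp]
        rw [hpersp]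
        have hsimp : ((inner ℝ x u + 0 * μ : ℝ) : EReal) = ((inner ℝ x u : ℝ) : EReal) := by
          norm_num
        rw [hsimp]
        suffices hle : ((inner ℝ x u : ℝ) : EReal) ≤ recFn f x0 x by
          exact EReal.sub_le_of_le_add' (by simpa using hle)
        by_cases htop : ∃ t, t ∈ Set.Ioi (0:ℝ) ∧ f (x0 + t • x) = ⊤
        · obtain ⟨t, ht, hft⟩ := htop
          have hterm : (f (x0 + t • x) - f x0) * ((t⁻¹ : ℝ) : EReal) = ⊤ := by
            rw [hft, hr0, EReal.top_sub_coe, EReal.top_mul_coe_of_pos (inv_pos.mpr ht)]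
          have h2 : (⊤ : EReal) ≤ recFn f x0 x := by
            rw [← hterm, recFn]
            exact le_iSup₂ (f := fun (t : ℝ) (_ : t ∈ Set.Ioi (0:ℝ)) =>
              (f (x0 + t • x) - f x0) * ((t⁻¹ : ℝ) : EReal)) t ht
          exact le_top.trans h2
        · push_neg at htop
          by_contra hcon
          push_neg at hcon
          obtain ⟨z, hz1, hz2⟩ := EReal.exists_between_coe_real hcon
          rw [EReal.coe_lt_coe_iff] at hz2
          set a := (inner ℝ x u : ℝ) with ha
          set c := (inner ℝ x0 u : ℝ) + μ - r0 with hc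
          set d := a - z with hd
          have hdpos : 0 < d := by rw [hd]; linarith
          set t := max 1 ((|c| + 1) / d) with htdef
          have ht1 : (1:ℝ) ≤ t := le_max_left _ _
          have htpos : (0:ℝ) < t := lt_of_lt_of_le one_pos ht1
          have htd : |c| + 1 ≤ t * d := by
            have := le_max_right 1 ((|c| + 1) / d)
            calc |c| + 1 = ((|c| + 1) / d) * d := by field_simp
            _ ≤ t * d := by
                apply mul_le_mul_of_nonneg_right _ hdpos.le
                rw [htdef]; exact le_max_right _ _
          obtain ⟨rt, hrt⟩ : ∃ r : ℝ, f (x0 + t • x) = (r : EReal) :=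
            ⟨(f (x0 + t • x)).toReal,
             (EReal.coe_toReal (htop t htpos) (hbot _)).symm⟩
          have hk := key (x0 + t • x) rt hrt
          have hk2 : (inner ℝ x0 u : ℝ) + t * a + μ ≤ rt := by
            have : (inner ℝ (x0 + t • x) u : ℝ)
                = (inner ℝ x0 u : ℝ) + t * (inner ℝ x u : ℝ) := by
              rw [inner_add_left, real_inner_smul_left]
            rw [this] at hk; linarith
          have hreal : z ≤ (rt - r0) * t⁻¹ := by
            have hti : (0:ℝ) < t⁻¹ := inv_pos.mpr htpos
            have hmul := mul_le_mul_of_nonneg_right htd hti.le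
            have h10 : t * d * t⁻¹ = d := by field_simp
            rw [h10] at hmul
            have h9 := mul_le_mul_of_nonneg_right (neg_abs_le c) hti.le
            have h8 : -d ≤ c * t⁻¹ := by nlinarith [hti]
            have h5 : t * a + c ≤ rt - r0 := by rw [hc]; linarith
            have h6 : (t * a + c) * t⁻¹ ≤ (rt - r0) * t⁻¹ :=
              mul_le_mul_of_nonneg_right h5 hti.le
            have h7 : (t * a + c) * t⁻¹ = a + c * t⁻¹ := by field_simp
            rw [h7] at h6
            have hdz : d = a - z := hd
            linarith
          have hterm : ((z : ℝ) : EReal) ≤ (f (x0 + t • x) - f x0) * ((t⁻¹ : ℝ) : EReal) := by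
            rw [hrt, hr0, ← EReal.coe_sub, ← EReal.coe_mul]
            exact_mod_cast hreal
          have h3 : ((z:ℝ) : EReal) ≤ recFn f x0 x := by
            refine hterm.trans ?_
            rw [recFn]
            exact le_iSup₂ (f := fun (t : ℝ) (_ : t ∈ Set.Ioi (0:ℝ)) =>
              (f (x0 + t • x) - f x0) * ((t⁻¹ : ℝ) : EReal)) t htpos
          exact absurd hz1 (not_lt.mpr h3)
      · -- η < 0
        have hpersp : persp f x0 (x, η) = ⊤ := by
          simp only [persp]; rw [if_neg (by linarith), if_neg (by linarith)]
        rw [hpersp, EReal.sub_top]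
        exact bot_le
    · -- conj2 ≥ 0
      have hrec0 : recFn f x0 (0:H) = 0 := by
        rw [recFn]
        have hcong : ∀ t ∈ Set.Ioi (0:ℝ),
            (f (x0 + t • (0:H)) - f x0) * ((t⁻¹ : ℝ) : EReal) = 0 := by
          intro t _
          rw [smul_zero, add_zero, hr0, ← EReal.coe_sub, sub_self]
          simp
        rw [biSup_congr hcong, biSup_const Set.nonempty_Ioi]
      have h0 : persp f x0 ((0:H), (0:ℝ)) = 0 := by
        simp [persp, hrec0]
      have hterm0 : (((inner ℝ ((0:H), (0:ℝ)).1 u : ℝ) + ((0:H), (0:ℝ)).2 * μ : ℝ) : EReal) -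
          persp f x0 ((0:H), (0:ℝ)) = 0 := by
        rw [h0]
        simp [inner_zero_left, sub_eq_add_neg]
      rw [conj2]
      calc (0:EReal) = _ := hterm0.symm
        _ ≤ _ := le_iSup
          (fun p : H × ℝ => (((inner ℝ p.1 u : ℝ) + p.2 * μ : ℝ) : EReal) - persp f x0 p)
          ((0:H), (0:ℝ))
  · have hCmem : ((u, μ) : H × ℝ) ∉ {q : H × ℝ | (q.2 : EReal) + conj f q.1 ≤ 0} := hC
    rw [indE, if_neg hCmem]
    rw [EReal.eq_top_iff_forall_lt]
    intro b
    rw [conj2, lt_iSup_iff]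
    have hClt : (0 : EReal) < ((μ : ℝ) : EReal) + conj f u := not_le.mp hC
    rcases ecases (conj f u) with hcb | ⟨s, hs⟩ | hct
    · exact absurd hcb hconj_ne_bot
    · -- conj f u = s, μ + s > 0
      have hμs : 0 < μ + s := by
        rw [hs, ← EReal.coe_add] at hClt
        exact_mod_cast hClt
      set δ := (μ + s) / 2 with hδ
      have hδpos : 0 < δ := by positivity
      have hlt : ((s - δ : ℝ) : EReal) < conj f u := by
        rw [hs, EReal.coe_lt_coe_iff]; linarith
      rw [conj, lt_iSup_iff] at hlt
      obtain ⟨x, hx⟩ := hlt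
      obtain ⟨r, hr⟩ : ∃ r : ℝ, f x = (r : EReal) := by
        rcases ecases (f x) with h1 | h1 | h1
        · exact absurd h1 (hbot x)
        · exact h1
        · rw [h1, EReal.sub_top] at hx; exact absurd hx (by simp)
      rw [hr, ← EReal.coe_sub, EReal.coe_lt_coe_iff] at hx
      set η := max 1 ((|b| + 1) / δ) with hη
      have hη1 : (1:ℝ) ≤ η := le_max_left _ _
      have hηpos : (0:ℝ) < η := lt_of_lt_of_le one_pos hη1
      refine ⟨(η • x, η), ?_⟩
      have hpersp : persp f x0 (η • x, η) = ((η * r : ℝ) : EReal) := by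
        simp only [persp]
        rw [if_pos hηpos, smul_smul, inv_mul_cancel₀ hηpos.ne', one_smul, hr,
          EReal.coe_mul]
      rw [hpersp]
      have hinner : (inner ℝ (η • x) u : ℝ) = η * (inner ℝ x u : ℝ) :=
        real_inner_smul_left _ _ _
      have hηδ : |b| + 1 ≤ η * δ := by
        calc |b| + 1 = ((|b| + 1) / δ) * δ := by field_simp
        _ ≤ η * δ := mul_le_mul_of_nonneg_right (le_max_right _ _) hδpos.le
      have hfinal : b < (inner ℝ (η • x) u : ℝ) + η * μ - η * r := by
        rw [hinner]
        nlinarith [abs_nonneg b, le_abs_self b, hx, hηpos]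
      rw [← EReal.coe_sub, EReal.coe_lt_coe_iff]
      exact hfinal
    · -- conj f u = ⊤
      have hlt : ((b - μ : ℝ) : EReal) < conj f u := by rw [hct]; exact EReal.coe_lt_top _
      rw [conj, lt_iSup_iff] at hlt
      obtain ⟨x, hx⟩ := hlt
      obtain ⟨r, hr⟩ : ∃ r : ℝ, f x = (r : EReal) := by
        rcases ecases (f x) with h1 | h1 | h1
        · exact absurd h1 (hbot x)
        · exact h1
        · rw [h1, EReal.sub_top] at hx; exact absurd hx (by simp)
      rw [hr, ← EReal.coe_sub, EReal.coe_lt_coe_iff] at hx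
      refine ⟨(x, 1), ?_⟩
      have hpersp : persp f x0 (x, (1:ℝ)) = (r : ℝ) := by
        simp only [persp]
        rw [if_pos one_pos, inv_one, one_smul, hr]
        simp
      rw [hpersp, ← EReal.coe_sub, EReal.coe_lt_coe_iff]
      simp only [one_mul]
      linarith
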